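/- For each Λ ∈ I, the vector u := v_Λ + ∑_{Γ ≺ Λ} t_{Λ,Γ}·v_Γ satisfies H(u) = λ(w(Λ))·u, and u − J_Λ lies in the span of { J_Ω : Ω ∈ I, w(Ω) < w(Λ) }; in particular u = J_Λ + a linear combination of the J_Ω with strictly smaller weight. -/

import Mathlib

open scoped Classical

/-- abstraction of Theorem 2 of the paper.
`I` is a finite index set with weight function `wt` and a strict partial order `prec`
preserving the weight; `(m i)` is a linearly independent family, `J i := m i + ∑_{j ≺ i}
t i j • m j`, and for each `i` a vector `v i` is given with `v i - m i` in the span of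
the strictly-lower-weight `m`'s and `H (v i) = λ (wt i) • v i`.  Then for each `Λ` the
vector `u := v Λ + ∑_{Γ ≺ Λ} t Λ Γ • v Γ` satisfies `H u = λ (wt Λ) • u` and `u - J Λ`
lies in the span of the `J Ω` with `wt Ω < wt Λ`. -/
theorem hermite_superpolynomial_eigenfunction
    (K : Type*) [Field K] (V : Type*) [AddCommGroup V] [Module K V]
    (I : Type*) [Fintype I] (wt : I → ℕ) (prec : I → I → Prop)
    (hstrict : IsStrictOrder I prec)
    (hwt : ∀ i j : I, prec i j → wt i = wt j)
    (m : I → V) (hind : LinearIndependent K m)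
    (t : I → I → K) (J : I → V)
    (hJ : ∀ i : I, J i = m i + ∑ j ∈ Finset.univ.filter (fun j => prec j i), t i j • m j)
    (H : V →ₗ[K] V) (lam : ℕ → K) (v : I → V)
    (hv : ∀ i : I, v i - m i ∈ Submodule.span K (m '' {j : I | wt j < wt i}))
    (hve : ∀ i : I, H (v i) = lam (wt i) • v i) :
    ∀ Λ : I,
      H (v Λ + ∑ Γ ∈ Finset.univ.filter (fun Γ => prec Γ Λ), t Λ Γ • v Γ)
        = lam (wt Λ) • (v Λ + ∑ Γ ∈ Finset.univ.filter (fun Γ => prec Γ Λ), t Λ Γ • v Γ) ∧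
      (v Λ + ∑ Γ ∈ Finset.univ.filter (fun Γ => prec Γ Λ), t Λ Γ • v Γ) - J Λ
        ∈ Submodule.span K (J '' {Ω : I | wt Ω < wt Λ}) := by
  intro Λ
  haveI := hstrict.toIrrefl
  haveI := hstrict.toIsTrans
  have hwf : WellFounded prec := Finite.wellFounded_of_trans_of_irrefl prec
  have key : ∀ n : ℕ, ∀ i : I, wt i < n →
      m i ∈ Submodule.span K (J '' {Ω : I | wt Ω < n}) := by
    intro n i
    induction i using hwf.induction with
    | _ i ih =>
      intro hi
      have hJi : m i = J i - ∑ j ∈ Finset.univ.filter (fun j => prec j i), t i j • m j := by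
        rw [hJ i]; abel
      rw [hJi]
      apply sub_mem
      · exact Submodule.subset_span ⟨i, hi, rfl⟩
      · apply Submodule.sum_mem
        intro j hj
        simp only [Finset.mem_filter, Finset.mem_univ, true_and] at hj
        exact Submodule.smul_mem _ _ (ih j hj (by rw [hwt j i hj]; exact hi))
  constructor
  · rw [map_add, map_sum, hve]
    simp only [map_smul, hve]
    rw [smul_add, Finset.smul_sum]
    congr 1
    apply Finset.sum_congr rfl
    intro Γ hΓ
    simp only [Finset.mem_filter, Finset.mem_univ, true_and] at hΓ
    rw [hwt Γ Λ hΓ, smul_comm]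
  · have hsub : Submodule.span K (m '' {j : I | wt j < wt Λ})
        ≤ Submodule.span K (J '' {Ω : I | wt Ω < wt Λ}) := by
      rw [Submodule.span_le]
      rintro x ⟨j, hj, rfl⟩
      exact key (wt Λ) j hj
    have heq : (v Λ + ∑ Γ ∈ Finset.univ.filter (fun Γ => prec Γ Λ), t Λ Γ • v Γ) - J Λ
        = (v Λ - m Λ) + ∑ Γ ∈ Finset.univ.filter (fun Γ => prec Γ Λ), t Λ Γ • (v Γ - m Γ) := by
      rw [hJ]
      simp only [smul_sub, Finset.sum_sub_distrib]
      abel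
    rw [heq]
    apply add_mem
    · exact hsub (hv Λ)
    · apply Submodule.sum_mem
      intro Γ hΓ
      simp only [Finset.mem_filter, Finset.mem_univ, true_and] at hΓ
      apply Submodule.smul_mem
      apply hsub
      have hw : {j : I | wt j < wt Γ} ⊆ {j : I | wt j < wt Λ} := by
        rw [hwt Γ Λ hΓ]
      exact Submodule.span_mono (Set.image_mono hw) (hv Γ)
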